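/- arXiv:2008.01722 — 2 statements merged into one kernel-verified Lean document; each statement's English description precedes it below -/
import Mathlib

section
/- Recursive solver error accumulation: suppose M ⪰ I is symmetric and an oracle A returns, for any input b, a vector v with ‖v − M⁻¹b‖₂ ≤ δ'‖b‖₂ where δ' = δ/(3K) and Kδ ≤ 1. Define v₀ = b and v_k = A(v_{k−1}) for k = 1,…,K. Then ‖v_K − M^{−K}b‖₂ ≤ δ‖b‖₂. -/
set_option maxHeartbeats 1000000


open Matrix
open scoped InnerProductSpace

/-- Recursive solver error accumulation: if `M ⪰ I`, `Kδ ≤ 1`, `v₀ = b`, and each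
step satisfies `‖v_{k+1} − M⁻¹ v_k‖ ≤ (δ/(3K))‖v_k‖`, then
`‖v_K − M^{−K} b‖ ≤ δ‖b‖`. -/
theorem stmt9 {d : ℕ} (M : Matrix (Fin d) (Fin d) ℝ)
    (hM : (M - 1).PosSemidef) (hMpd : M.PosDef)
    (K : ℕ) (hK : 0 < K) (δ : ℝ) (hδ : 0 < δ) (hKδ : (K : ℝ) * δ ≤ 1)
    (b : EuclideanSpace ℝ (Fin d)) (v : ℕ → EuclideanSpace ℝ (Fin d)) (hv0 : v 0 = b)
    (hstep : ∀ k < K,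
      ‖v (k + 1) - (Matrix.toEuclideanCLM (𝕜 := ℝ) M⁻¹) (v k)‖ ≤ δ / (3 * K) * ‖v k‖) :
    ‖v K - (Matrix.toEuclideanCLM (𝕜 := ℝ) (M⁻¹ ^ K)) b‖ ≤ δ * ‖b‖ := by
  set T := Matrix.toEuclideanCLM (𝕜 := ℝ) M⁻¹ with hT
  set δ' := δ / (3 * K) with hδ'
  have hKpos : (0 : ℝ) < K := by exact_mod_cast hK
  have hδ'pos : 0 < δ' := by positivity
  have hK1 : (1:ℝ) ≤ K := by exact_mod_cast hK
  have hδle1 : δ ≤ 1 := by nlinarith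
  have hKδ' : (K : ℝ) * δ' ≤ 1 / 3 := by
    have h : (K:ℝ) * (δ / (3 * K)) = δ / 3 := by field_simp
    rw [hδ', h]; linarith
  -- M * M⁻¹ = 1
  have hMinv : M * M⁻¹ = 1 :=
    Matrix.mul_nonsing_inv M (isUnit_iff_ne_zero.mpr hMpd.det_pos.ne')
  -- T is a contraction
  have hTle : ∀ x : EuclideanSpace ℝ (Fin d), ‖T x‖ ≤ ‖x‖ := by
    intro x
    have h2 : (Matrix.toEuclideanCLM (𝕜 := ℝ) M) (T x) = x := by
      have hcomp : (Matrix.toEuclideanCLM (𝕜 := ℝ) M) * T = 1 := by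
        rw [hT, ← _root_.map_mul, hMinv, _root_.map_one]
      calc (Matrix.toEuclideanCLM (𝕜 := ℝ) M) (T x)
          = ((Matrix.toEuclideanCLM (𝕜 := ℝ) M) * T) x := rfl
        _ = x := by rw [hcomp]; rfl
    have h1 : ‖T x‖ ^ 2 ≤ ⟪T x, (Matrix.toEuclideanCLM (𝕜 := ℝ) M) (T x)⟫_ℝ := by
      set z : Fin d → ℝ := WithLp.equiv 2 _ (T x) with hz
      have hpsd := hM.dotProduct_mulVec_nonneg z
      have hdot : ⟪T x, (Matrix.toEuclideanCLM (𝕜 := ℝ) M) (T x)⟫_ℝ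
          = dotProduct (star z) (M *ᵥ z) := by
        rw [EuclideanSpace.inner_eq_star_dotProduct, dotProduct_comm, ofLp_toEuclideanCLM]
        rfl
      have hnorm : ‖T x‖ ^ 2 = dotProduct (star z) z := by
        rw [← real_inner_self_eq_norm_sq, EuclideanSpace.inner_eq_star_dotProduct]
        exact dotProduct_comm _ _
      rw [hdot, hnorm]
      have : dotProduct (star z) ((M - 1) *ᵥ z)
          = dotProduct (star z) (M *ᵥ z) - dotProduct (star z) z := by
        rw [Matrix.sub_mulVec, dotProduct_sub, Matrix.one_mulVec]
      linarith [hpsd, this ▸ hpsd]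
    rw [h2] at h1
    have h3 : ⟪T x, x⟫_ℝ ≤ ‖T x‖ * ‖x‖ := real_inner_le_norm _ _
    nlinarith [norm_nonneg (T x), norm_nonneg x]
  -- growth bound on the iterates
  have hvk : ∀ k ≤ K, ‖v k‖ ≤ (1 + 2 * k * δ') * ‖b‖ := by
    intro k hk
    induction k with
    | zero => simp [hv0]
    | succ k ih =>
      have hkK : k < K := hk
      have ih' := ih (Nat.le_of_lt hkK)
      have hkδ' : (k : ℝ) * δ' ≤ 1 / 3 := by
        have : (k : ℝ) ≤ K := by exact_mod_cast Nat.le_of_lt hkK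
        nlinarith
      have h1 : ‖v (k + 1)‖ ≤ (1 + δ') * ‖v k‖ := by
        calc ‖v (k + 1)‖ = ‖(v (k + 1) - T (v k)) + T (v k)‖ := by rw [sub_add_cancel]
          _ ≤ ‖v (k + 1) - T (v k)‖ + ‖T (v k)‖ := norm_add_le _ _
          _ ≤ δ' * ‖v k‖ + ‖v k‖ := add_le_add (hstep k hkK) (hTle _)
          _ = (1 + δ') * ‖v k‖ := by ring
      have hvknn : (0:ℝ) ≤ ‖v k‖ := norm_nonneg _
      have hbnn : (0:ℝ) ≤ ‖b‖ := norm_nonneg _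
      have hc : (1 + δ') * (1 + 2 * (k:ℝ) * δ') ≤ 1 + 2 * ((k:ℝ) + 1) * δ' := by
        nlinarith [hδ'pos.le, hkδ']
      calc ‖v (k + 1)‖ ≤ (1 + δ') * ‖v k‖ := h1
        _ ≤ (1 + δ') * ((1 + 2 * k * δ') * ‖b‖) := by
            apply mul_le_mul_of_nonneg_left ih' (by positivity)
        _ = ((1 + δ') * (1 + 2 * (k:ℝ) * δ')) * ‖b‖ := by ring
        _ ≤ (1 + 2 * ((k:ℝ) + 1) * δ') * ‖b‖ := mul_le_mul_of_nonneg_right hc hbnn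
        _ = (1 + 2 * (↑(k + 1)) * δ') * ‖b‖ := by push_cast; ring
  have hvk2 : ∀ k ≤ K, ‖v k‖ ≤ 2 * ‖b‖ := by
    intro k hk
    have h1 := hvk k hk
    have hkδ' : (k : ℝ) * δ' ≤ 1 / 3 := by
      have : (k : ℝ) ≤ K := by exact_mod_cast hk
      nlinarith
    have hbnn : (0:ℝ) ≤ ‖b‖ := norm_nonneg _
    have h2 : (1 + 2 * (k:ℝ) * δ') ≤ 2 := by linarith
    calc ‖v k‖ ≤ (1 + 2 * (k:ℝ) * δ') * ‖b‖ := h1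
      _ ≤ 2 * ‖b‖ := mul_le_mul_of_nonneg_right h2 hbnn
  -- error accumulation
  have herr : ∀ k ≤ K, ‖v k - (T ^ k) b‖ ≤ 2 * k * δ' * ‖b‖ := by
    intro k hk
    induction k with
    | zero => simp [hv0]
    | succ k ih =>
      have hkK : k < K := hk
      have ih' := ih (Nat.le_of_lt hkK)
      have hsplit : v (k + 1) - (T ^ (k + 1)) b
          = (v (k + 1) - T (v k)) + T (v k - (T ^ k) b) := by
        rw [pow_succ']
        rw [map_sub]
        rw [ContinuousLinearMap.mul_apply]
        abel
      have hbnn : (0:ℝ) ≤ ‖b‖ := norm_nonneg _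
      calc ‖v (k + 1) - (T ^ (k + 1)) b‖
          ≤ ‖v (k + 1) - T (v k)‖ + ‖T (v k - (T ^ k) b)‖ := by
            rw [hsplit]; exact norm_add_le _ _
        _ ≤ δ' * ‖v k‖ + ‖v k - (T ^ k) b‖ :=
            add_le_add (hstep k hkK) (hTle _)
        _ ≤ δ' * (2 * ‖b‖) + 2 * k * δ' * ‖b‖ := by
            have := hvk2 k (Nat.le_of_lt hkK)
            nlinarith
        _ = 2 * (↑(k + 1) : ℝ) * δ' * ‖b‖ := by push_cast; ring
  have hfinal := herr K le_rfl
  have hpow : (Matrix.toEuclideanCLM (𝕜 := ℝ) (M⁻¹ ^ K)) = T ^ K := by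
    rw [hT, map_pow]
  rw [hpow]
  have h2Kδ' : 2 * (K : ℝ) * δ' ≤ δ := by
    have h : (K:ℝ) * δ' = δ / 3 := by rw [hδ']; field_simp
    have h2 : 2 * ((K:ℝ) * δ') = 2 * (δ / 3) := by rw [h]
    linarith
  have hbnn : (0:ℝ) ≤ ‖b‖ := norm_nonneg _
  nlinarith
end

section
/- Weighted heteroskedastic risk bound: under b = A·x_true + ξ with E[ξξᵀ] = σ²·diag({‖a_i‖₂²}), for nonnegative diagonal W, the weighted least-squares solution x̃ = (AᵀWA)⁻¹AᵀWb satisfies E[‖x̃ − x_true‖²_{AᵀWA}] ≤ σ²·Tr(AᵀWA), and hence E[‖x̃ − x_true‖₂²] ≤ σ²·τ(W^{1/2}A). -/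
open Matrix BigOperators MeasureTheory

lemma quad_expand {m : ℕ} (Q : Matrix (Fin m) (Fin m) ℝ) (u : Fin m → ℝ) :
    u ⬝ᵥ (Q *ᵥ u) = ∑ i, ∑ j, Q i j * (u i * u j) := by
  simp only [dotProduct, mulVec, Finset.mul_sum]
  exact Finset.sum_congr rfl fun i _ => Finset.sum_congr rfl fun j _ => by ring

lemma dot_diag {m : ℕ} (v z : Fin m → ℝ) :
    z ⬝ᵥ (Matrix.diagonal v *ᵥ z) = ∑ i, v i * z i ^ 2 := by
  simp only [dotProduct, Matrix.mulVec, Matrix.diagonal_apply, ite_mul, zero_mul,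
    Finset.sum_ite_eq, Finset.mem_univ, if_true]
  exact Finset.sum_congr rfl fun i _ => by ring

lemma iInf_eig_mul_le {m : ℕ} {S : Matrix (Fin m) (Fin m) ℝ} (hS : S.IsHermitian)
    (x : Fin m → ℝ) :
    (⨅ i, hS.eigenvalues i) * (∑ i, x i ^ 2) ≤ x ⬝ᵥ (S *ᵥ x) := by
  set U : Matrix (Fin m) (Fin m) ℝ := (hS.eigenvectorUnitary : Matrix (Fin m) (Fin m) ℝ) with hU
  have hUst : star U = Uᵀ := by
    rw [Matrix.star_eq_conjTranspose, conjTranspose_eq_transpose_of_trivial]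
  have hUU : U * star U = 1 := Matrix.mem_unitaryGroup_iff.mp (hS.eigenvectorUnitary).2
  set y : Fin m → ℝ := star U *ᵥ x with hy
  have hdot : ∀ z : Fin m → ℝ, x ⬝ᵥ (U *ᵥ z) = y ⬝ᵥ z := by
    intro z
    rw [dotProduct_mulVec, hy, hUst, mulVec_transpose]
  have hx2 : ∑ i, x i ^ 2 = ∑ i, y i ^ 2 := by
    have h1 : ∑ i, x i ^ 2 = x ⬝ᵥ x := by simp [dotProduct, sq]
    have h2 : ∑ i, y i ^ 2 = y ⬝ᵥ y := by simp [dotProduct, sq]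
    rw [h1, h2]
    calc x ⬝ᵥ x = x ⬝ᵥ ((U * star U) *ᵥ x) := by rw [hUU, one_mulVec]
    _ = x ⬝ᵥ (U *ᵥ (star U *ᵥ x)) := by rw [mulVec_mulVec]
    _ = y ⬝ᵥ y := hdot _
  have hq : x ⬝ᵥ (S *ᵥ x) = ∑ i, hS.eigenvalues i * y i ^ 2 := by
    conv_lhs => rw [hS.spectral_theorem, Unitary.conjStarAlgAut_apply]
    rw [← mulVec_mulVec, ← mulVec_mulVec, hdot]
    have : RCLike.ofReal ∘ hS.eigenvalues = hS.eigenvalues := by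
      ext i; simp
    rw [this]
    exact dot_diag _ _
  rw [hq, hx2, Finset.mul_sum]
  refine Finset.sum_le_sum fun i _ => ?_
  have hle : (⨅ j, hS.eigenvalues j) ≤ hS.eigenvalues i :=
    ciInf_le (Set.Finite.bddBelow (Set.finite_range _)) i
  exact mul_le_mul_of_nonneg_right hle (sq_nonneg _)

/-- Weighted heteroskedastic risk bound: under `b = A x_true + ξ` with
`E[ξξᵀ] = σ²·diag(‖aᵢ‖₂²)` and nonnegative diagonal `W` with `AᵀWA` positive
definite, the weighted least-squares solution `x̃ = (AᵀWA)⁻¹AᵀWb` satisfies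
`E[‖x̃ − x_true‖²_{AᵀWA}] ≤ σ²·Tr(AᵀWA)`, hence
`E[‖x̃ − x_true‖₂²] ≤ σ²·τ(W^{1/2}A) = σ²·Tr(AᵀWA)/λ_min(AᵀWA)`. -/
theorem stmt16 {n d : ℕ} {Ω : Type*} [MeasurableSpace Ω]
    (μ : Measure Ω) [IsProbabilityMeasure μ]
    (A : Matrix (Fin n) (Fin d) ℝ) (w : Fin n → ℝ) (hw : ∀ i, 0 ≤ w i)
    (hS : (Aᵀ * Matrix.diagonal w * A).PosDef)
    (σ : ℝ) (xtrue : Fin d → ℝ) (ξ : Ω → Fin n → ℝ)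
    (hint : ∀ i j, Integrable (fun ω => ξ ω i * ξ ω j) μ)
    (hcov : ∀ i j, (∫ ω, ξ ω i * ξ ω j ∂μ) =
      if i = j then σ ^ 2 * ∑ k, A i k ^ 2 else 0)
    (b : Ω → Fin n → ℝ) (hb : ∀ ω, b ω = A *ᵥ xtrue + ξ ω)
    (xt : Ω → Fin d → ℝ)
    (hx : ∀ ω, xt ω = (Aᵀ * Matrix.diagonal w * A)⁻¹ *ᵥ
      ((Aᵀ * Matrix.diagonal w) *ᵥ b ω)) :
    (∫ ω, (xt ω - xtrue) ⬝ᵥ ((Aᵀ * Matrix.diagonal w * A) *ᵥ (xt ω - xtrue)) ∂μ) ≤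
        σ ^ 2 * (Aᵀ * Matrix.diagonal w * A).trace ∧
      (∫ ω, ∑ i, (xt ω i - xtrue i) ^ 2 ∂μ) ≤
        σ ^ 2 * ((Aᵀ * Matrix.diagonal w * A).trace / (⨅ i, hS.1.eigenvalues i)) := by
  classical
  set S : Matrix (Fin d) (Fin d) ℝ := Aᵀ * Matrix.diagonal w * A with hSdef
  -- basic invertibility facts
  have hdet : IsUnit S.det := isUnit_iff_ne_zero.mpr hS.det_pos.ne'
  have hinvS : S⁻¹ * S = 1 := Matrix.nonsing_inv_mul S hdet
  have hSinv : S * S⁻¹ = 1 := Matrix.mul_nonsing_inv S hdet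
  have hSsymm : Sᵀ = S := by
    have := hS.1.eq
    rwa [Matrix.conjTranspose_eq_transpose_of_trivial] at this
  have hSinvsymm : (S⁻¹)ᵀ = S⁻¹ := by
    rw [Matrix.transpose_nonsing_inv, hSsymm]
  set M : Matrix (Fin d) (Fin n) ℝ := S⁻¹ * (Aᵀ * Matrix.diagonal w) with hMdef
  -- the error vector
  have hdiff : ∀ ω, xt ω - xtrue = M *ᵥ ξ ω := by
    intro ω
    rw [hx, hb]
    rw [mulVec_add, mulVec_mulVec, mulVec_add, mulVec_mulVec, mulVec_mulVec,
      ← hSdef, hinvS, one_mulVec, ← hMdef]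
    exact add_sub_cancel_left xtrue (M *ᵥ ξ ω)
  -- quadratic form transfer
  have hquadS : ∀ (C : Matrix (Fin d) (Fin d) ℝ) (u : Fin n → ℝ),
      (M *ᵥ u) ⬝ᵥ (C *ᵥ (M *ᵥ u)) = u ⬝ᵥ ((Mᵀ * C * M) *ᵥ u) := by
    intro C u
    rw [Matrix.mul_assoc, ← mulVec_mulVec u Mᵀ (C * M),
      dotProduct_mulVec u Mᵀ ((C * M) *ᵥ u), vecMul_transpose M u,
      mulVec_mulVec u C M]
  -- integral of a quadratic form in ξ
  have hQint : ∀ (Q : Matrix (Fin n) (Fin n) ℝ),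
      Integrable (fun ω => ∑ i, ∑ j, Q i j * (ξ ω i * ξ ω j)) μ := by
    intro Q
    exact integrable_finset_sum _ fun i _ =>
      integrable_finset_sum _ fun j _ => (hint i j).const_mul _
  have hQval : ∀ (Q : Matrix (Fin n) (Fin n) ℝ),
      (∫ ω, ∑ i, ∑ j, Q i j * (ξ ω i * ξ ω j) ∂μ)
        = ∑ i, Q i i * (σ ^ 2 * ∑ k, A i k ^ 2) := by
    intro Q
    rw [integral_finset_sum (f := fun i ω => ∑ j, Q i j * (ξ ω i * ξ ω j)) _ fun i _ =>
      integrable_finset_sum _ fun j _ => (hint i j).const_mul _]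
    refine Finset.sum_congr rfl fun i _ => ?_
    rw [integral_finset_sum _ fun j _ => (hint i j).const_mul _]
    have hterm : ∀ j, (∫ ω, Q i j * (ξ ω i * ξ ω j) ∂μ)
        = Q i j * (if i = j then σ ^ 2 * ∑ k, A i k ^ 2 else 0) := by
      intro j
      rw [integral_const_mul, hcov]
    simp only [hterm, mul_ite, mul_zero]
    simp [Finset.sum_ite_eq]
  -- Q for the first quadratic form
  set Q1 : Matrix (Fin n) (Fin n) ℝ := Mᵀ * S * M with hQ1def
  have hQ1 : Q1 = Matrix.diagonal w * (A * S⁻¹ * Aᵀ) * Matrix.diagonal w := by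
    rw [hQ1def, hMdef]
    rw [Matrix.transpose_mul, Matrix.transpose_mul, Matrix.transpose_transpose,
      Matrix.diagonal_transpose, hSinvsymm]
    -- (W * A * S⁻¹) * S * (S⁻¹ * (Aᵀ * W))
    calc Matrix.diagonal w * A * S⁻¹ * S * (S⁻¹ * (Aᵀ * Matrix.diagonal w))
        = Matrix.diagonal w * A * ((S⁻¹ * S) * S⁻¹) * (Aᵀ * Matrix.diagonal w) := by
          simp only [Matrix.mul_assoc]
      _ = Matrix.diagonal w * (A * S⁻¹ * Aᵀ) * Matrix.diagonal w := by
          rw [hinvS, one_mul]; simp only [Matrix.mul_assoc]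
  -- the key scalar bound  w i * q i ≤ 1
  have hkey : ∀ i : Fin n, w i * ((A * S⁻¹ * Aᵀ) i i) ≤ 1 := by
    intro i
    set a : Fin d → ℝ := fun j => A i j with ha
    set u : Fin d → ℝ := S⁻¹ *ᵥ a with hu
    have hBii : (A * S⁻¹ * Aᵀ) i i = a ⬝ᵥ u := by
      simp only [Matrix.mul_apply, Matrix.transpose_apply, dotProduct, mulVec, hu, ha,
        Finset.sum_mul, Finset.mul_sum]
      rw [Finset.sum_comm]
      exact Finset.sum_congr rfl fun k _ => Finset.sum_congr rfl fun j _ => by ring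
    have hSu : S *ᵥ u = a := by
      rw [hu, mulVec_mulVec, hSinv, one_mulVec]
    have hquad : u ⬝ᵥ (S *ᵥ u) = ∑ k, w k * ((A *ᵥ u) k) ^ 2 := by
      have h1 : Aᵀ *ᵥ (Matrix.diagonal w *ᵥ (A *ᵥ u)) = S *ᵥ u := by
        rw [mulVec_mulVec, mulVec_mulVec, ← hSdef]
      rw [← h1, dotProduct_mulVec u Aᵀ _, vecMul_transpose A u]
      exact dot_diag w (A *ᵥ u)
    have hAui : (A *ᵥ u) i = a ⬝ᵥ u := rfl
    have hq0 : 0 ≤ a ⬝ᵥ u := by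
      have : a ⬝ᵥ u = u ⬝ᵥ (S *ᵥ u) := by rw [hSu, dotProduct_comm]
      rw [this, hquad]
      exact Finset.sum_nonneg fun k _ => mul_nonneg (hw k) (sq_nonneg _)
    have hmain : w i * (a ⬝ᵥ u) ^ 2 ≤ a ⬝ᵥ u := by
      have h1 : u ⬝ᵥ (S *ᵥ u) = a ⬝ᵥ u := by rw [hSu, dotProduct_comm]
      calc w i * (a ⬝ᵥ u) ^ 2 = w i * ((A *ᵥ u) i) ^ 2 := by rw [hAui]
        _ ≤ ∑ k, w k * ((A *ᵥ u) k) ^ 2 :=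
            Finset.single_le_sum (fun k _ => mul_nonneg (hw k) (sq_nonneg _))
              (Finset.mem_univ i)
        _ = u ⬝ᵥ (S *ᵥ u) := hquad.symm
        _ = a ⬝ᵥ u := h1
    rw [hBii]
    rcases eq_or_lt_of_le hq0 with h | h
    · rw [← h, mul_zero]; exact zero_le_one
    · have := mul_le_mul_of_nonneg_right hmain (le_of_lt (inv_pos.mpr h))
      rw [mul_inv_cancel₀ h.ne'] at this
      calc w i * (a ⬝ᵥ u) = w i * (a ⬝ᵥ u) ^ 2 * (a ⬝ᵥ u)⁻¹ := by
            field_simp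
        _ ≤ 1 := this
  -- trace formula
  have htr : S.trace = ∑ i, w i * ∑ k, A i k ^ 2 := by
    rw [hSdef, Matrix.trace_mul_cycle, Matrix.trace]
    refine Finset.sum_congr rfl fun i _ => ?_
    rw [Matrix.diag_apply, Matrix.mul_diagonal, Matrix.mul_apply, mul_comm,
      Finset.mul_sum, Finset.mul_sum]
    exact Finset.sum_congr rfl fun k _ => by
      simp only [Matrix.transpose_apply]; ring
  -- first inequality
  have hQ1diag : ∀ i, Q1 i i = w i * (A * S⁻¹ * Aᵀ) i i * w i := by
    intro i
    rw [hQ1]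
    simp [Matrix.diagonal_mul, Matrix.mul_diagonal]
  have first : (∫ ω, (xt ω - xtrue) ⬝ᵥ (S *ᵥ (xt ω - xtrue)) ∂μ)
      ≤ σ ^ 2 * S.trace := by
    have hfun : (fun ω => (xt ω - xtrue) ⬝ᵥ (S *ᵥ (xt ω - xtrue)))
        = fun ω => ∑ i, ∑ j, Q1 i j * (ξ ω i * ξ ω j) := by
      funext ω
      rw [hdiff ω, hquadS, ← hQ1def, quad_expand]
    rw [hfun, hQval]
    rw [htr, Finset.mul_sum]
    refine Finset.sum_le_sum fun i _ => ?_
    have h1 : Q1 i i ≤ w i := by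
      rw [hQ1diag]
      calc w i * (A * S⁻¹ * Aᵀ) i i * w i ≤ 1 * w i :=
        mul_le_mul_of_nonneg_right (hkey i) (hw i)
      _ = w i := one_mul _
    have h2 : 0 ≤ σ ^ 2 * ∑ k, A i k ^ 2 :=
      mul_nonneg (sq_nonneg _) (Finset.sum_nonneg fun k _ => sq_nonneg _)
    calc Q1 i i * (σ ^ 2 * ∑ k, A i k ^ 2) ≤ w i * (σ ^ 2 * ∑ k, A i k ^ 2) :=
        mul_le_mul_of_nonneg_right h1 h2
      _ = σ ^ 2 * (w i * ∑ k, A i k ^ 2) := by ring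
  refine ⟨first, ?_⟩
  -- second inequality
  rcases Nat.eq_zero_or_pos d with hd | hd
  · subst hd
    have hz : (∫ ω, ∑ i : Fin 0, (xt ω i - xtrue i) ^ 2 ∂μ) = 0 := by
      simp
    rw [hz]
    have htr0 : (Aᵀ * Matrix.diagonal w * A).trace = 0 := by
      rw [Matrix.trace]; simp
    rw [htr0]
    simp
  · have : Nonempty (Fin d) := ⟨⟨0, hd⟩⟩
    set lam : ℝ := ⨅ i, hS.1.eigenvalues i with hlam
    have hlampos : 0 < lam := by
      obtain ⟨i0, hi0⟩ := Finite.exists_min hS.1.eigenvalues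
      exact lt_of_lt_of_le (hS.eigenvalues_pos i0) (le_ciInf hi0)
    set Q2 : Matrix (Fin n) (Fin n) ℝ := Mᵀ * M with hQ2def
    have hfun2 : (fun ω => ∑ i, (xt ω i - xtrue i) ^ 2)
        = fun ω => ∑ i, ∑ j, Q2 i j * (ξ ω i * ξ ω j) := by
      funext ω
      have h1 : ∑ i, (xt ω i - xtrue i) ^ 2
          = (M *ᵥ ξ ω) ⬝ᵥ ((1 : Matrix (Fin d) (Fin d) ℝ) *ᵥ (M *ᵥ ξ ω)) := by
        rw [one_mulVec]
        simp only [dotProduct, sq]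
        refine Finset.sum_congr rfl fun i _ => ?_
        rw [← hdiff ω]
        simp [Pi.sub_apply]
      rw [h1, hquadS, ← quad_expand]
      congr 1
      rw [hQ2def, Matrix.mul_one]
    have hmono : lam * (∫ ω, ∑ i, ∑ j, Q2 i j * (ξ ω i * ξ ω j) ∂μ)
        ≤ ∫ ω, ∑ i, ∑ j, Q1 i j * (ξ ω i * ξ ω j) ∂μ := by
      rw [← integral_const_mul]
      refine integral_mono ((hQint Q2).const_mul _) (hQint Q1) fun ω => ?_
      have := iInf_eig_mul_le hS.1 (xt ω - xtrue)
      rw [hdiff ω] at this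
      have e2 : ∑ i, ((M *ᵥ ξ ω) i) ^ 2 = ∑ i, ∑ j, Q2 i j * (ξ ω i * ξ ω j) := by
        have := congrFun hfun2 ω
        rw [← this]
        refine Finset.sum_congr rfl fun i _ => ?_
        rw [← hdiff ω]
        simp [Pi.sub_apply]
      have e1 : (M *ᵥ ξ ω) ⬝ᵥ (S *ᵥ (M *ᵥ ξ ω)) = ∑ i, ∑ j, Q1 i j * (ξ ω i * ξ ω j) := by
        rw [hquadS, ← hQ1def, quad_expand]
      calc lam * ∑ i, ∑ j, Q2 i j * (ξ ω i * ξ ω j)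
          = lam * ∑ i, ((M *ᵥ ξ ω) i) ^ 2 := by rw [e2]
        _ ≤ (M *ᵥ ξ ω) ⬝ᵥ (S *ᵥ (M *ᵥ ξ ω)) := this
        _ = ∑ i, ∑ j, Q1 i j * (ξ ω i * ξ ω j) := e1
    have hI1 : (∫ ω, ∑ i, ∑ j, Q1 i j * (ξ ω i * ξ ω j) ∂μ) ≤ σ ^ 2 * S.trace := by
      have hfun : (fun ω => (xt ω - xtrue) ⬝ᵥ (S *ᵥ (xt ω - xtrue)))
          = fun ω => ∑ i, ∑ j, Q1 i j * (ξ ω i * ξ ω j) := by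
        funext ω
        rw [hdiff ω, hquadS, ← hQ1def, quad_expand]
      rw [← hfun]
      exact first
    have hfinal : lam * (∫ ω, ∑ i, (xt ω i - xtrue i) ^ 2 ∂μ) ≤ σ ^ 2 * S.trace := by
      rw [hfun2]
      exact le_trans hmono hI1
    show (∫ ω, ∑ i, (xt ω i - xtrue i) ^ 2 ∂μ) ≤ σ ^ 2 * (S.trace / lam)
    rw [← mul_div_assoc, le_div_iff₀ hlampos]
    calc (∫ ω, ∑ i, (xt ω i - xtrue i) ^ 2 ∂μ) * lam
        = lam * (∫ ω, ∑ i, (xt ω i - xtrue i) ^ 2 ∂μ) := mul_comm _ _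
      _ ≤ σ ^ 2 * S.trace := hfinal
end
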